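/- arXiv:1503.09069 — 5 statements merged into one kernel-verified Lean document; each statement's English description precedes it below -/
import Mathlib

section
/- Let w, b, T be natural numbers with w + b = T and T ≥ m ≥ 1, and let a_k = (m−k)·A − (m−k−1)·B for rationals A, B, 0 ≤ k ≤ m. Then ∑_{k=0}^{m} a_{m−k} · C(w,k)·C(b,m−k)/C(T,m) = (w/T)·m·(A − B) + B. In particular, the conditional expectation of the increment of white balls under sampling without replacement is affine linear in w. -/
open Finset

lemma vandermonde_range (w b m : ℕ) :
    ∑ k ∈ range (m + 1), w.choose k * b.choose (m - k) = (w + b).choose m := by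
  rw [Nat.add_choose_eq, Finset.Nat.sum_antidiagonal_eq_sum_range_succ_mk]

lemma mul_choose_aux (w j : ℕ) : (j + 1) * w.choose (j + 1) = w * (w - 1).choose j := by
  cases w with
  | zero => simp [Nat.choose_eq_zero_of_lt]
  | succ n =>
    simpa [Nat.mul_comm] using (Nat.add_one_mul_choose_eq n j).symm

lemma weighted_vandermonde (w b m : ℕ) :
    ∑ k ∈ range (m + 2), k * (w.choose k * b.choose (m + 1 - k))
      = w * (w + b - 1).choose m := by
  rw [Finset.sum_range_succ'] -- splits off the k = 0 term
  simp only [Nat.zero_mul, Nat.add_zero]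
  have : ∀ j ∈ range (m + 1),
      (j + 1) * (w.choose (j + 1) * b.choose (m + 1 - (j + 1)))
        = w * ((w - 1).choose j * b.choose (m - j)) := by
    intro j hj
    have : m + 1 - (j + 1) = m - j := by omega
    rw [this, ← Nat.mul_assoc, mul_choose_aux, Nat.mul_assoc]
  rw [Finset.sum_congr rfl this, ← Finset.mul_sum, vandermonde_range]
  cases w with
  | zero => simp
  | succ n => congr 2; omega

/-- Under the affinity condition, the conditional expected increment of white balls
under sampling without replacement (hypergeometric sampling) is affine linear in `w`. -/
theorem affine_increment_without_replacement (m w b T : ℕ) (A B : ℚ)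
    (hT : w + b = T) (hm : 1 ≤ m) (hmT : m ≤ T) (a : ℕ → ℚ)
    (ha : ∀ k ≤ m, a k = ((m : ℚ) - k) * A - ((m : ℚ) - k - 1) * B) :
    ∑ k ∈ range (m + 1),
        a (m - k) * ((w.choose k * b.choose (m - k) : ℚ) / (T.choose m))
      = (w / T) * m * (A - B) + B := by
  have hT1 : 1 ≤ T := le_trans hm hmT
  have hNn : 0 < T.choose m := Nat.choose_pos hmT
  have hN : (T.choose m : ℚ) ≠ 0 := by positivity
  have hTQ : (T : ℚ) ≠ 0 := by positivity
  -- the two key counting identities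
  have hvdm : (∑ k ∈ range (m + 1), (w.choose k * b.choose (m - k) : ℚ))
      = (T.choose m : ℚ) := by
    have h := congrArg (Nat.cast : ℕ → ℚ) (vandermonde_range w b m)
    push_cast at h
    rw [hT] at h
    exact h
  have hwv : (∑ k ∈ range (m + 1), (k : ℚ) * (w.choose k * b.choose (m - k)))
      = (w : ℚ) * ((T - 1).choose (m - 1)) := by
    obtain ⟨m', rfl⟩ : ∃ m', m = m' + 1 := ⟨m - 1, by omega⟩
    have h := congrArg (Nat.cast : ℕ → ℚ) (weighted_vandermonde w b m')
    have h2 : w + b - 1 = T - 1 := by omega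
    rw [h2] at h
    push_cast at h
    simpa using h
  have hkey : (T : ℚ) * ((T - 1).choose (m - 1)) = m * T.choose m := by
    obtain ⟨T', rfl⟩ : ∃ T', T = T' + 1 := ⟨T - 1, by omega⟩
    obtain ⟨m', rfl⟩ : ∃ m', m = m' + 1 := ⟨m - 1, by omega⟩
    have h := congrArg (Nat.cast : ℕ → ℚ) (Nat.add_one_mul_choose_eq T' m')
    push_cast at h
    simp only [Nat.add_sub_cancel]
    push_cast
    linear_combination h
  have ha' : ∀ k ∈ range (m + 1),
      a (m - k) * ((w.choose k * b.choose (m - k) : ℚ) / (T.choose m))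
        = ((k : ℚ) * (A - B) + B) * (w.choose k * b.choose (m - k)) / (T.choose m) := by
    intro k hk
    rw [Finset.mem_range] at hk
    rw [ha (m - k) (by omega)]
    have hmk : ((m - k : ℕ) : ℚ) = (m : ℚ) - k := by
      rw [Nat.cast_sub (by omega : k ≤ m)]
    rw [hmk]
    ring
  rw [Finset.sum_congr rfl ha']
  have expand : ∑ k ∈ range (m + 1),
      ((k : ℚ) * (A - B) + B) * (w.choose k * b.choose (m - k)) / (T.choose m)
      = ((A - B) * ∑ k ∈ range (m + 1), (k : ℚ) * (w.choose k * b.choose (m - k))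
        + B * ∑ k ∈ range (m + 1), (w.choose k * b.choose (m - k) : ℚ)) / (T.choose m) := by
    rw [Finset.mul_sum, Finset.mul_sum, ← Finset.sum_add_distrib, Finset.sum_div]
    apply Finset.sum_congr rfl
    intro k _
    ring
  rw [expand, hvdm, hwv]
  field_simp
  linear_combination (A - B) * (w : ℚ) * hkey
end

section
/- For real (or rational) numbers x, y with y ≠ x + 1 and suitable non-degeneracy (denominators nonzero), the summation identity ∑_{k=1}^{s} C(k+x, k)/C(k+y, k) = ((s+1+y)·C(s+1+x, s+1))/((x+1−y)·C(s+1+y, s+1)) − (x+1)/(x+1−y) holds, where C(z, k) = z(z−1)⋯(z−k+1)/k! denotes the generalized binomial coefficient. -/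
open Finset Polynomial

/-- Generalized binomial coefficient `C(z,k) = z(z-1)⋯(z-k+1)/k!` for real `z`. -/
noncomputable def genChoose (z : ℝ) (k : ℕ) : ℝ :=
  (descPochhammer ℝ k).eval z / k.factorial

lemma genChoose_succ (z : ℝ) (k : ℕ) :
    genChoose (z + 1) (k + 1) = (z + 1) * genChoose z k / (k + 1) := by
  unfold genChoose
  rw [descPochhammer_succ_left]
  have hf : (k.factorial:ℝ) ≠ 0 := Nat.cast_ne_zero.mpr k.factorial_ne_zero
  have hk : (k:ℝ) + 1 ≠ 0 := by positivity
  simp only [eval_mul, eval_X, eval_comp, eval_sub, eval_one, Nat.factorial_succ,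
    Nat.cast_mul, Nat.cast_add, Nat.cast_one, add_sub_cancel_right]
  rw [mul_div_assoc, mul_div_assoc, div_div, mul_comm ((k:ℝ)+1)]

lemma genChoose_one (z : ℝ) : genChoose z 1 = z := by
  simp [genChoose]

/-- The summation identity
`∑_{k=1}^{s} C(k+x,k)/C(k+y,k)
   = (s+1+y)·C(s+1+x,s+1)/((x+1-y)·C(s+1+y,s+1)) - (x+1)/(x+1-y)`. -/
theorem sum_ratio_genChoose (x y : ℝ) (s : ℕ) (hxy : x + 1 ≠ y)
    (hden : ∀ k ∈ Icc 1 s, genChoose (k + y) k ≠ 0)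
    (hden' : genChoose (s + 1 + y) (s + 1) ≠ 0) :
    ∑ k ∈ Icc 1 s, genChoose (k + x) k / genChoose (k + y) k
      = ((s + 1 + y) * genChoose (s + 1 + x) (s + 1))
          / ((x + 1 - y) * genChoose (s + 1 + y) (s + 1))
        - (x + 1) / (x + 1 - y) := by
  have hxy' : x + 1 - y ≠ 0 := sub_ne_zero.mpr hxy
  induction s with
  | zero =>
      simp only [Nat.cast_zero, zero_add, genChoose_one] at hden' ⊢
      rw [Finset.Icc_eq_empty (by omega : ¬ (1:ℕ) ≤ 0), sum_empty]
      field_simp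
      ring
  | succ s ih =>
      have hB : genChoose (s + 1 + y) (s + 1) ≠ 0 := by
        have := hden (s + 1) (by simp)
        push_cast at this ⊢
        convert this using 3
      have ihs := ih (fun k hk => hden k (Icc_subset_Icc_right (Nat.le_succ s) hk)) hB
      rw [Finset.sum_Icc_succ_top (by omega : 1 ≤ s + 1), ihs]
      have hrec : genChoose (↑(s+1) + 1 + x) (s + 1 + 1)
          = (↑s + 1 + 1 + x) * genChoose (↑s + 1 + x) (s + 1) / (↑s + 1 + 1) := by
        have := genChoose_succ (↑s + 1 + x) (s + 1)
        push_cast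
        rw [show (↑s:ℝ) + 1 + 1 + x = (↑s + 1 + x) + 1 by ring, this]
        push_cast; ring
      have hrecy : genChoose (↑(s+1) + 1 + y) (s + 1 + 1)
          = (↑s + 1 + 1 + y) * genChoose (↑s + 1 + y) (s + 1) / (↑s + 1 + 1) := by
        have := genChoose_succ (↑s + 1 + y) (s + 1)
        push_cast
        rw [show (↑s:ℝ) + 1 + 1 + y = (↑s + 1 + y) + 1 by ring, this]
        push_cast; ring
      have hB' : genChoose (↑(s+1) + 1 + y) (s + 1 + 1) ≠ 0 := by
        push_cast at hden' ⊢; exact hden'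
      have hsy : (↑s:ℝ) + 1 + 1 + y ≠ 0 := by
        intro h
        apply hB'
        rw [hrecy, h, zero_mul, zero_div]
      push_cast at hrec hrecy hB' ⊢
      rw [hrec, hrecy]
      have hs1 : ((s:ℝ) + 1 + 1) ≠ 0 := by positivity
      field_simp
      ring
end

section
/- Suppose (x_n), (c_n), (d_n) are nonnegative real sequences satisfying x_{n+1} ≤ c_n·x_n + d_n with 0 < c_n < 1 for all n ≥ 1. If ∏_{i=1}^{n} c_i → 0 as n → ∞ and ∑_{n=1}^{∞} d_n < ∞, then x_n → 0. -/
open Finset Filter Topology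

/-- If `x_{n+1} ≤ c_n x_n + d_n` with `0 < c_n < 1`, `∏ c_i → 0` and `∑ d_n < ∞`,
then `x_n → 0`. -/
theorem tendsto_zero_of_recursive_bound (x c d : ℕ → ℝ)
    (hx : ∀ n, 1 ≤ n → 0 ≤ x n) (hc : ∀ n, 1 ≤ n → 0 < c n ∧ c n < 1)
    (hd : ∀ n, 1 ≤ n → 0 ≤ d n)
    (hrec : ∀ n, 1 ≤ n → x (n + 1) ≤ c n * x n + d n)
    (hprod : Tendsto (fun n => ∏ i ∈ Icc 1 n, c i) atTop (𝓝 0))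
    (hsum : Summable d) :
    Tendsto x atTop (𝓝 0) := by
  -- key iterated bound
  have key : ∀ m, 1 ≤ m → ∀ n, m ≤ n →
      x (n + 1) ≤ (∏ i ∈ Icc m n, c i) * x m + ∑ i ∈ Icc m n, d i := by
    intro m hm n hn
    induction n with
    | zero => omega
    | succ n ih =>
      rcases Nat.lt_or_ge m (n + 1) with h | h
      · have hmn : m ≤ n := by omega
        have ihn := ih hmn
        have h1 : 1 ≤ n + 1 := by omega
        have hcn := hc (n + 1) h1
        have hdn := hd (n + 1) h1
        have hsumnn : 0 ≤ ∑ i ∈ Icc m n, d i :=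
          Finset.sum_nonneg fun i hi => hd i (by
            have := (Finset.mem_Icc.mp hi).1; omega)
        have hprodnn : 0 ≤ ∏ i ∈ Icc m n, c i :=
          Finset.prod_nonneg fun i hi => (hc i (by
            have := (Finset.mem_Icc.mp hi).1; omega)).1.le
        have hrec' := hrec (n + 1) h1
        have hxm : 0 ≤ x m := hx m hm
        calc x (n + 1 + 1) ≤ c (n + 1) * x (n + 1) + d (n + 1) := hrec'
          _ ≤ c (n + 1) * ((∏ i ∈ Icc m n, c i) * x m + ∑ i ∈ Icc m n, d i) + d (n + 1) := by
              nlinarith [hcn.1, hx (n+1) h1]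
          _ = ((∏ i ∈ Icc m n, c i) * c (n + 1)) * x m
              + (c (n + 1) * ∑ i ∈ Icc m n, d i + d (n + 1)) := by ring
          _ ≤ ((∏ i ∈ Icc m n, c i) * c (n + 1)) * x m
              + (∑ i ∈ Icc m n, d i + d (n + 1)) := by
              nlinarith [hcn.2]
          _ = (∏ i ∈ Icc m (n + 1), c i) * x m + ∑ i ∈ Icc m (n + 1), d i := by
              rw [Finset.prod_Icc_succ_top (by omega), Finset.sum_Icc_succ_top (by omega)]
      · have hmn : m = n + 1 := by omega
        subst hmn
        simp only [Finset.Icc_self, Finset.prod_singleton, Finset.sum_singleton]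
        exact hrec _ hm
  -- main proof via metric
  rw [Metric.tendsto_atTop]
  intro ε hε
  -- choose m so tail sums of d are < ε/2
  obtain ⟨s, hs⟩ := summable_iff_vanishing.mp hsum (Set.Iio (ε / 2)) (Iio_mem_nhds (by linarith))
  set m : ℕ := max (s.sup id + 1) 1 with hm_def
  have hm1 : 1 ≤ m := le_max_right _ _
  have htail : ∀ n, m ≤ n → ∑ i ∈ Icc m n, d i < ε / 2 := by
    intro n hn
    have hdisj : Disjoint (Icc m n) s := by
      rw [Finset.disjoint_left]
      intro i hi his
      have h1 := (Finset.mem_Icc.mp hi).1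
      have h2 : id i ≤ s.sup id := Finset.le_sup his
      simp only [id] at h2
      have : s.sup id + 1 ≤ m := le_max_left _ _
      omega
    exact hs _ hdisj
  -- positivity of the head product
  have hC : 0 < ∏ i ∈ Icc 1 (m - 1), c i :=
    Finset.prod_pos fun i hi => (hc i (Finset.mem_Icc.mp hi).1).1
  set C := ∏ i ∈ Icc 1 (m - 1), c i with hC_def
  have hxm : 0 ≤ x m := hx m hm1
  have hδ : 0 < C * (ε / 2) / (x m + 1) := by positivity
  obtain ⟨N, hN⟩ := (Metric.tendsto_atTop.mp hprod) (C * (ε / 2) / (x m + 1)) hδ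
  refine ⟨max N m + 1, fun n hn => ?_⟩
  obtain ⟨k, rfl⟩ : ∃ k, n = k + 1 := ⟨n - 1, by omega⟩
  have hkm : m ≤ k := by omega
  have hkN : N ≤ k := by omega
  have hk1 : 1 ≤ k := le_trans hm1 hkm
  -- split product
  have hsplit : C * ∏ i ∈ Icc m k, c i = ∏ i ∈ Icc 1 k, c i := by
    have h1 : Icc m k = Ioc (m - 1) k := by
      ext i; simp [Finset.mem_Icc, Finset.mem_Ioc]; omega
    have h2 : Icc 1 (m - 1) = Ioc 0 (m - 1) := by
      ext i; simp [Finset.mem_Icc, Finset.mem_Ioc]; omega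
    have h3 : Icc 1 k = Ioc 0 k := by
      ext i; simp [Finset.mem_Icc, Finset.mem_Ioc]; omega
    rw [hC_def, h1, h2, h3]
    exact Finset.prod_Ioc_consecutive c (by omega) (by omega)
  have hPnn : 0 ≤ ∏ i ∈ Icc m k, c i :=
    Finset.prod_nonneg fun i hi => (hc i (le_trans hm1 (Finset.mem_Icc.mp hi).1)).1.le
  have hprod_small : ∏ i ∈ Icc 1 k, c i < C * (ε / 2) / (x m + 1) := by
    have := hN k hkN
    rw [Real.dist_eq, sub_zero] at this
    have hppos : 0 ≤ ∏ i ∈ Icc 1 k, c i :=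
      Finset.prod_nonneg fun i hi => (hc i (Finset.mem_Icc.mp hi).1).1.le
    rwa [abs_of_nonneg hppos] at this
  have hPsmall : (∏ i ∈ Icc m k, c i) * x m < ε / 2 := by
    rcases eq_or_lt_of_le hxm with h | h
    · rw [← h, mul_zero]; linarith
    have h1 : C * ((∏ i ∈ Icc m k, c i) * x m) < C * (ε / 2) := by
      have h2 : C * (∏ i ∈ Icc m k, c i) * x m < C * (ε / 2) / (x m + 1) * x m := by
        exact mul_lt_mul_of_pos_right (by rw [hsplit]; exact hprod_small) h
      have h3 : C * (ε / 2) / (x m + 1) * x m ≤ C * (ε / 2) := by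
        rw [div_mul_eq_mul_div, div_le_iff₀ (by positivity)]
        nlinarith
      calc C * ((∏ i ∈ Icc m k, c i) * x m) = C * (∏ i ∈ Icc m k, c i) * x m := by ring
        _ < _ := lt_of_lt_of_le h2 h3
    exact lt_of_mul_lt_mul_left h1 hC.le
  have hbound := key m hm1 k hkm
  have hxk1 : x (k + 1) < ε := by
    have := htail k hkm
    linarith
  rw [Real.dist_eq, sub_zero, abs_of_nonneg (hx (k + 1) (by omega))]
  exact hxk1
end

section
/- Let W_n satisfy E[W_n | 𝓕_{n−1}] = ((T_{n−1} + c)/T_{n−1})·W_{n−1} + β with T_n = σn + T₀, σ ≥ 1, T₀ + c > 0, and let Λ = c/σ < 1, β ≥ 0. Then the expectation satisfies E[W_n] = (β/(1−Λ))·n + O(n^Λ) + O(1) as n → ∞. If Λ = 1 (forcing β = 0 under tenability), then E[W_n] = W₀·(nσ + T₀)/T₀ exactly. -/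
open MeasureTheory Filter Topology Asymptotics

set_option maxHeartbeats 1600000 in
/-- Asymptotics of the expectation for an affine urn recursion
`E[W_n | 𝓕_{n-1}] = ((T_{n-1}+c)/T_{n-1}) W_{n-1} + β` with `T_n = σn + T₀` and
index `Λ = c/σ`: if `Λ < 1` then `E[W_n] = (β/(1-Λ)) n + O(n^Λ) + O(1)`, and if
`Λ = 1` (with `β = 0`) then `E[W_n] = W₀ (nσ + T₀)/T₀` exactly. -/
theorem expectation_asymptotics_affine_urn {Ω : Type*} {m0 : MeasurableSpace Ω}
    (μ : Measure Ω) [IsProbabilityMeasure μ] (𝓕 : Filtration ℕ m0)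
    (W : ℕ → Ω → ℝ) (σ T₀ c β : ℝ) (hσ : 1 ≤ σ) (hT₀ : 0 < T₀)
    (hpos : 0 < T₀ + c) (hβ : 0 ≤ β)
    (hadapted : Adapted 𝓕 W) (hint : ∀ n, Integrable (W n) μ)
    (hcond : ∀ n, 1 ≤ n →
      μ[W n | 𝓕 (n - 1)] =ᵐ[μ]
        fun ω => ((σ * (n - 1 : ℕ) + T₀ + c) / (σ * (n - 1 : ℕ) + T₀)) * W (n - 1) ω + β) :
    (c / σ < 1 →
      (fun n : ℕ => (∫ ω, W n ω ∂μ) - (β / (1 - c / σ)) * n)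
        =O[atTop] fun n : ℕ => (n : ℝ) ^ (c / σ) + 1) ∧
    (c / σ = 1 → β = 0 →
      ∀ n : ℕ, (∫ ω, W n ω ∂μ) = (∫ ω, W 0 ω ∂μ) * (n * σ + T₀) / T₀) := by
  have hσ0 : (0:ℝ) < σ := lt_of_lt_of_le one_pos hσ
  set a : ℕ → ℝ := fun n => ∫ ω, W n ω ∂μ with ha
  set r : ℕ → ℝ := fun k => (σ * k + T₀ + c) / (σ * k + T₀) with hr
  have ht : ∀ k : ℕ, (0:ℝ) < σ * k + T₀ := by
    intro k
    have : (0:ℝ) ≤ σ * k := by positivity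
    linarith
  have htc : ∀ k : ℕ, (0:ℝ) < σ * k + T₀ + c := by
    intro k
    have : (0:ℝ) ≤ σ * k := by positivity
    linarith
  have hrec : ∀ k : ℕ, a (k + 1) = r k * a k + β := by
    intro k
    have h1 := hcond (k+1) (Nat.le_add_left 1 k)
    simp only [Nat.add_sub_cancel] at h1
    have h2 : a (k+1) = ∫ ω, (μ[W (k+1) | 𝓕 k]) ω ∂μ :=
      (integral_condExp (𝓕.le k)).symm
    rw [h2, integral_congr_ae h1,
        integral_add ((hint k).const_mul _) (integrable_const β),
        integral_const_mul, integral_const]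
    simp [measure_univ]
    rfl
  set u : ℕ → ℝ := fun n => ∏ k ∈ Finset.range n, r k with hu
  have hu_pos : ∀ n, 0 < u n := by
    intro n
    exact Finset.prod_pos fun k _ => div_pos (htc k) (ht k)
  constructor
  · -- case Λ < 1
    intro hΛ
    have hΛσ : c < σ := (div_lt_one hσ0).mp hΛ
    have h1Λ : (0:ℝ) < 1 - c / σ := by linarith
    set b : ℝ := β / (1 - c / σ) with hbdef
    set K : ℝ := b * T₀ / σ with hKdef
    have hb : β = b * (1 - c / σ) := (div_mul_cancel₀ β h1Λ.ne').symm
    have hcf : ∀ n : ℕ, a n - (b * n + K) = (a 0 - K) * u n := by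
      intro n
      induction n with
      | zero => simp [hu]
      | succ n ih =>
        have hkey : r n * (b * n + K) + β = b * (n + 1) + K := by
          rw [hr, hKdef]
          nth_rewrite 1 [hb]
          have h1' := (ht n).ne'
          field_simp
          ring
        have hstep : u (n+1) = u n * r n := Finset.prod_range_succ r n
        have ih2 : a n = (a 0 - K) * u n + (b * n + K) := by linarith
        push_cast
        rw [hrec n, hstep, ih2]
        linear_combination hkey
    -- bound on the product u
    have hub : ∃ Cu : ℝ, 0 < Cu ∧ ∀ n : ℕ, 1 ≤ n → u n ≤ Cu * ((n:ℝ) ^ (c/σ) + 1) := by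
      rcases le_or_gt c 0 with hc | hc
      · refine ⟨1, one_pos, fun n hn => ?_⟩
        have h1 : u n ≤ 1 := by
          apply Finset.prod_le_one
          · intro k _; exact le_of_lt (div_pos (htc k) (ht k))
          · intro k _
            rw [div_le_one (ht k)]
            linarith
        have h2 : (0:ℝ) ≤ (n:ℝ) ^ (c/σ) := by positivity
        linarith
      · -- c > 0, so 0 < Λ < 1
        have hΛ0 : 0 < c / σ := div_pos hc hσ0
        have hfac : ∀ m : ℕ,
            r (m+1) ≤ ((σ * ((m:ℝ) + 1) + T₀) / (σ * (m:ℝ) + T₀)) ^ (c/σ) := by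
          intro m
          have htpos : (0:ℝ) < σ * ((m:ℝ) + 1) + T₀ := by
            have := ht (m+1); push_cast at this; linarith
          have hspos : (0:ℝ) < σ * (m:ℝ) + T₀ := ht m
          set t : ℝ := σ * ((m:ℝ) + 1) + T₀ with htdef
          set s : ℝ := σ * (m:ℝ) + T₀ with hsdef
          have hst : s = t - σ := by rw [hsdef, htdef]; ring
          have hx1 : σ / t < 1 := by
            rw [div_lt_one htpos, htdef]
            have : (0:ℝ) ≤ σ * m := by positivity
            linarith
          have hx0 : 0 < σ / t := div_pos hσ0 htpos
          have hber : (1 + -(σ/t)) ^ (c/σ) ≤ 1 + (c/σ) * -(σ/t) :=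
            rpow_one_add_le_one_add_mul_self (by linarith) hΛ0.le hΛ.le
          have hstt : 1 + -(σ/t) = s / t := by
            rw [hst]; field_simp; ring
          rw [hstt] at hber
          have hber' : (s/t) ^ (c/σ) ≤ 1 - (c/σ) * (σ/t) := by linarith
          have hpow : (0:ℝ) < (s/t) ^ (c/σ) :=
            Real.rpow_pos_of_pos (div_pos hspos htpos) _
          have hrval : r (m+1) = 1 + (c/σ) * (σ/t) := by
            rw [hr]
            push_cast
            rw [htdef]
            field_simp
          have h5 : (1 + (c/σ) * (σ/t)) * ((s/t) ^ (c/σ)) ≤ 1 := by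
            have hx2 : 0 ≤ 1 + (c/σ) * (σ/t) := by positivity
            calc (1 + (c/σ)*(σ/t)) * ((s/t) ^ (c/σ))
                ≤ (1 + (c/σ)*(σ/t)) * (1 - (c/σ)*(σ/t)) :=
                  mul_le_mul_of_nonneg_left hber' hx2
              _ = 1 - ((c/σ)*(σ/t))^2 := by ring
              _ ≤ 1 := by nlinarith
          have h6 : 1 + (c/σ) * (σ/t) ≤ 1 / ((s/t) ^ (c/σ)) :=
            (le_div_iff₀ hpow).mpr h5
          have h7 : (s/t) ^ (c/σ) * (t/s) ^ (c/σ) = 1 := by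
            rw [← Real.mul_rpow (by positivity) (by positivity)]
            rw [show s/t * (t/s) = 1 by field_simp]
            exact Real.one_rpow _
          have h8 : (t/s) ^ (c/σ) = 1 / ((s/t) ^ (c/σ)) :=
            eq_one_div_of_mul_eq_one_left (by linarith [h7] )
          rw [hrval]
          rw [← h8] at h6
          exact h6
        have hA : ∀ m : ℕ,
            u (m+1) ≤ ((T₀+c)/T₀) * ((σ * (m:ℝ) + T₀) / T₀) ^ (c/σ) := by
          intro m
          induction m with
          | zero =>
            have h1 : u 1 = (T₀ + c) / T₀ := by simp [hu, hr]
            rw [h1]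
            simp [div_self hT₀.ne']
          | succ m ih =>
            have hstep : u (m+2) = u (m+1) * r (m+1) := Finset.prod_range_succ r (m+1)
            have hfm := hfac m
            have hrpos : (0:ℝ) < r (m+1) := div_pos (htc (m+1)) (ht (m+1))
            calc u (m+2) = u (m+1) * r (m+1) := hstep
              _ ≤ (((T₀+c)/T₀) * ((σ * (m:ℝ) + T₀) / T₀) ^ (c/σ)) *
                  (((σ * ((m:ℝ)+1) + T₀) / (σ * (m:ℝ) + T₀)) ^ (c/σ)) := by
                  apply mul_le_mul ih hfm hrpos.le (by positivity)
              _ = ((T₀+c)/T₀) * ((σ * ((m+1:ℕ):ℝ) + T₀) / T₀) ^ (c/σ) := by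
                  rw [mul_assoc, ← Real.mul_rpow (by positivity) (by positivity)]
                  have hq : (σ * (m:ℝ) + T₀) / T₀ *
                      ((σ * ((m:ℝ)+1) + T₀) / (σ * (m:ℝ) + T₀))
                      = (σ * ((m+1:ℕ):ℝ) + T₀) / T₀ := by
                    have h1' := (ht m).ne'
                    push_cast
                    field_simp
                  rw [hq]
        refine ⟨((T₀+c)/T₀) * (((σ+T₀)/T₀) ^ (c/σ)), by positivity, ?_⟩
        intro n hn
        obtain ⟨m, rfl⟩ : ∃ m, n = m + 1 := ⟨n - 1, by omega⟩
        have h1 := hA m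
        have h2 : ((σ * (m:ℝ) + T₀) / T₀) ^ (c/σ)
            ≤ ((σ+T₀)/T₀) ^ (c/σ) * ((m+1:ℕ):ℝ) ^ (c/σ) := by
          rw [← Real.mul_rpow (by positivity) (by positivity)]
          apply Real.rpow_le_rpow (by positivity) ?_ hΛ0.le
          have hmn : (0:ℝ) ≤ (m:ℝ) := Nat.cast_nonneg m
          rw [div_mul_eq_mul_div, div_le_div_iff₀ hT₀ hT₀]
          push_cast
          nlinarith [mul_pos hσ0 hT₀, mul_nonneg (mul_nonneg hT₀.le hmn) hT₀.le]
        have h3 : (0:ℝ) ≤ (T₀+c)/T₀ := by positivity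
        have h4 : (0:ℝ) ≤ (((m+1:ℕ):ℝ)) ^ (c/σ) := by positivity
        calc u (m+1) ≤ ((T₀+c)/T₀) * ((σ * (m:ℝ) + T₀) / T₀) ^ (c/σ) := h1
          _ ≤ ((T₀+c)/T₀) * (((σ+T₀)/T₀) ^ (c/σ) * ((m+1:ℕ):ℝ) ^ (c/σ)) :=
              mul_le_mul_of_nonneg_left h2 h3
          _ = (((T₀+c)/T₀) * (((σ+T₀)/T₀) ^ (c/σ))) * ((m+1:ℕ):ℝ) ^ (c/σ) := by ring
          _ ≤ (((T₀+c)/T₀) * (((σ+T₀)/T₀) ^ (c/σ))) * (((m+1:ℕ):ℝ) ^ (c/σ) + 1) := by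
              have : (0:ℝ) < ((T₀+c)/T₀) * (((σ+T₀)/T₀) ^ (c/σ)) := by positivity
              nlinarith
    obtain ⟨Cu, hCu0, hCu⟩ := hub
    have final : (fun n : ℕ => a n - b * n) =O[atTop]
        (fun n : ℕ => (n:ℝ) ^ (c/σ) + 1) := by
      rw [isBigO_iff]
      refine ⟨|K| + |a 0 - K| * Cu, ?_⟩
      filter_upwards [eventually_ge_atTop 1] with n hn
      have h1 : a n - b * n = K + (a 0 - K) * u n := by
        have := hcf n; linarith
      have hnn : (0:ℝ) ≤ (n:ℝ) ^ (c/σ) := by positivity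
      have h4 : ‖(n:ℝ) ^ (c/σ) + 1‖ = (n:ℝ) ^ (c/σ) + 1 := by
        rw [Real.norm_eq_abs, abs_of_pos]; linarith
      rw [h1, h4, Real.norm_eq_abs]
      have h2 : |K + (a 0 - K) * u n| ≤ |K| + |a 0 - K| * u n := by
        calc |K + (a 0 - K) * u n| ≤ |K| + |(a 0 - K) * u n| := abs_add_le _ _
          _ = |K| + |a 0 - K| * u n := by rw [abs_mul, abs_of_pos (hu_pos n)]
      have h3 := hCu n hn
      have h5 : |a 0 - K| * u n ≤ |a 0 - K| * (Cu * ((n:ℝ) ^ (c/σ) + 1)) :=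
        mul_le_mul_of_nonneg_left h3 (abs_nonneg _)
      have h6 : |K| ≤ |K| * ((n:ℝ) ^ (c/σ) + 1) := by
        nlinarith [abs_nonneg K]
      calc |K + (a 0 - K) * u n| ≤ |K| + |a 0 - K| * u n := h2
        _ ≤ |K| * ((n:ℝ) ^ (c/σ) + 1) + |a 0 - K| * (Cu * ((n:ℝ) ^ (c/σ) + 1)) := by
            linarith
        _ = (|K| + |a 0 - K| * Cu) * ((n:ℝ) ^ (c/σ) + 1) := by ring
    exact final
  · -- case Λ = 1
    intro h1 hβ0
    have hc : c = σ := by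
      rw [div_eq_one_iff_eq hσ0.ne'] at h1; exact h1
    have key : ∀ n : ℕ, a n = a 0 * ((n:ℝ) * σ + T₀) / T₀ := by
      intro n
      induction n with
      | zero =>
        rw [Nat.cast_zero, zero_mul, zero_add, mul_div_assoc, div_self hT₀.ne', mul_one]
      | succ n ih =>
        have h := hrec n
        rw [hβ0, add_zero] at h
        rw [h, ih]
        simp only [hr]
        rw [hc]
        have h1' := (ht n).ne'
        have h2' : σ * ((n:ℕ):ℝ) + T₀ ≠ 0 := h1'
        push_cast
        field_simp
        ring
    exact fun n => key n
end

section
/- Let (Z_n) be a sequence of random variables uniformly bounded in absolute value such that E[Z_n² | 𝓕_{n−1}] ≤ c_n·Z_{n−1}² + d_n with deterministic 0 < c_n < 1, d_n ≥ 0, ∑ d_n < ∞ and ∏_{i=1}^n c_i → 0. Suppose moreover there is κ > 0 with E[Z_n² + κ/T_n | 𝓕_{n−1}] ≤ Z_{n−1}² + κ/T_{n−1} for a positive increasing sequence T_n → ∞. Then Z_n² + κ/T_n is a nonnegative supermartingale, Z_n² converges almost surely, E[Z_n²] → 0, and consequently Z_n → 0 almost surely. -/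
open Finset MeasureTheory Filter Topology


private lemma aux_key (a c d : ℕ → ℝ) (ha : ∀ n, 0 ≤ a n)
    (hrec : ∀ n, 1 ≤ n → a n ≤ c n * a (n - 1) + d n)
    (hc : ∀ n, 1 ≤ n → 0 < c n ∧ c n < 1)
    (hd : ∀ n, 1 ≤ n → 0 ≤ d n) :
    ∀ m n, m ≤ n → a n ≤ (∏ i ∈ Ioc m n, c i) * a m + ∑ k ∈ Ioc m n, d k := by
  intro m n hmn
  induction n with
  | zero => interval_cases m; simp
  | succ n ih =>
    rcases Nat.lt_or_ge m (n + 1) with h | h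
    · have hmn' : m ≤ n := Nat.lt_succ_iff.mp h
      have h1 := hrec (n + 1) (by omega)
      simp only [Nat.add_sub_cancel] at h1
      have hcp := hc (n + 1) (by omega)
      have hih := ih hmn'
      have hS : 0 ≤ ∑ k ∈ Ioc m n, d k :=
        Finset.sum_nonneg fun k hk => hd k (by have := (Finset.mem_Ioc.mp hk).1; omega)
      have hP : 0 ≤ ∏ i ∈ Ioc m n, c i :=
        Finset.prod_nonneg fun i hi => (hc i (by have := (Finset.mem_Ioc.mp hi).1; omega)).1.le
      calc a (n + 1) ≤ c (n + 1) * a n + d (n + 1) := h1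
        _ ≤ c (n + 1) * ((∏ i ∈ Ioc m n, c i) * a m + ∑ k ∈ Ioc m n, d k) + d (n + 1) := by
            nlinarith [hcp.1, hih]
        _ ≤ (∏ i ∈ Ioc m (n + 1), c i) * a m + ∑ k ∈ Ioc m (n + 1), d k := by
            rw [Finset.prod_Ioc_succ_top hmn', Finset.sum_Ioc_succ_top hmn']
            nlinarith [hcp.1, hcp.2, hS, hP, ha m]
    · have hm : m = n + 1 := le_antisymm hmn h
      subst hm; simp

private lemma aux_tendsto (a c d : ℕ → ℝ) (ha : ∀ n, 0 ≤ a n)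
    (hrec : ∀ n, 1 ≤ n → a n ≤ c n * a (n - 1) + d n)
    (hc : ∀ n, 1 ≤ n → 0 < c n ∧ c n < 1)
    (hd : ∀ n, 1 ≤ n → 0 ≤ d n) (hsum : Summable d)
    (hprod : Tendsto (fun n => ∏ i ∈ Icc 1 n, c i) atTop (𝓝 0)) :
    Tendsto a atTop (𝓝 0) := by
  have key := aux_key a c d ha hrec hc hd
  have hprod' : Tendsto (fun n => ∏ i ∈ Ioc 0 n, c i) atTop (𝓝 0) := by
    simpa [← Finset.Icc_add_one_left_eq_Ioc] using hprod
  rw [Metric.tendsto_atTop]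
  intro ε hε
  have hε2 : (0:ℝ) < ε / 2 := by positivity
  -- choose m with small tail
  have htail : Tendsto (fun m => ∑' k, d (k + (m + 1))) atTop (𝓝 0) :=
    (tendsto_sum_nat_add d).comp (tendsto_add_atTop_nat 1)
  obtain ⟨m, hm⟩ := (htail.eventually (gt_mem_nhds hε2)).exists
  have hsum' : Summable fun k => d (k + (m + 1)) := (summable_nat_add_iff (m + 1)).2 hsum
  have htailb : ∀ n, m ≤ n → ∑ k ∈ Ioc m n, d k ≤ ε / 2 := by
    intro n hn
    have h1 : ∑ k ∈ Ioc m n, d k = ∑ j ∈ range (n + 1 - (m + 1)), d (j + (m + 1)) := by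
      rw [← Finset.Ico_add_one_add_one_eq_Ioc, Finset.sum_Ico_eq_sum_range]
      exact Finset.sum_congr rfl fun j _ => by rw [Nat.add_comm]
    rw [h1]
    exact le_of_lt (lt_of_le_of_lt
      (Summable.sum_le_tsum (range (n + 1 - (m + 1))) (fun j _ => hd _ (by omega)) hsum') hm)
  set pm := ∏ i ∈ Ioc 0 m, c i with hpmdef
  have hpm : 0 < pm := Finset.prod_pos fun i hi => (hc i (Finset.mem_Ioc.mp hi).1).1
  have hq : Tendsto (fun n => (∏ i ∈ Ioc 0 n, c i) / pm * a m) atTop (𝓝 0) := by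
    simpa using (hprod'.div_const pm).mul_const (a m)
  obtain ⟨N, hN⟩ := eventually_atTop.mp (hq.eventually (gt_mem_nhds hε2))
  refine ⟨max m N, fun n hn => ?_⟩
  have hmn : m ≤ n := le_trans (le_max_left _ _) hn
  have hprodeq : (∏ i ∈ Ioc m n, c i) = (∏ i ∈ Ioc 0 n, c i) / pm := by
    rw [eq_div_iff hpm.ne', mul_comm]
    exact Finset.prod_Ioc_consecutive c (Nat.zero_le m) hmn
  have hb := key m n hmn
  rw [hprodeq] at hb
  have h2 := htailb n hmn
  have h3 := hN n (le_trans (le_max_right _ _) hn)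
  rw [Real.dist_eq, sub_zero, abs_of_nonneg (ha n)]
  linarith



/-- Supermartingale argument for almost sure convergence of `Z_n` to `0`:
if `E[Z_n² | 𝓕_{n-1}] ≤ c_n Z_{n-1}² + d_n` with `0 < c_n < 1`, `∑ d_n < ∞`,
`∏ c_i → 0`, and `Z_n² + κ/T_n` is a conditional supermartingale for some positive
increasing `T_n → ∞`, then `Z_n² + κ/T_n` is a nonnegative supermartingale, `Z_n²`
converges a.s., `E[Z_n²] → 0`, and `Z_n → 0` almost surely. -/
theorem supermartingale_Zn_tendsto_zero {Ω : Type*} {m0 : MeasurableSpace Ω}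
    (μ : Measure Ω) [IsProbabilityMeasure μ] (𝓕 : Filtration ℕ m0)
    (Z : ℕ → Ω → ℝ) (c d T : ℕ → ℝ) (K κ : ℝ) (hκ : 0 < κ)
    (hadapted : Adapted 𝓕 Z)
    (hint : ∀ n, Integrable (fun ω => Z n ω ^ 2) μ)
    (hbdd : ∀ n, ∀ᵐ ω ∂μ, |Z n ω| ≤ K)
    (hc : ∀ n, 1 ≤ n → 0 < c n ∧ c n < 1) (hd : ∀ n, 1 ≤ n → 0 ≤ d n)
    (hsum : Summable d)
    (hprod : Tendsto (fun n => ∏ i ∈ Icc 1 n, c i) atTop (𝓝 0))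
    (hT : ∀ n, 0 < T n) (hTmono : Monotone T) (hTtop : Tendsto T atTop atTop)
    (hrec : ∀ n, 1 ≤ n →
      μ[fun ω => Z n ω ^ 2 | 𝓕 (n - 1)] ≤ᵐ[μ] fun ω => c n * Z (n - 1) ω ^ 2 + d n)
    (hsuper : ∀ n, 1 ≤ n →
      μ[fun ω => Z n ω ^ 2 + κ / T n | 𝓕 (n - 1)]
        ≤ᵐ[μ] fun ω => Z (n - 1) ω ^ 2 + κ / T (n - 1)) :
    Supermartingale (fun n ω => Z n ω ^ 2 + κ / T n) 𝓕 μ ∧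
    (∀ n, 0 ≤ᵐ[μ] fun ω => Z n ω ^ 2 + κ / T n) ∧
    (∀ᵐ ω ∂μ, ∃ L : ℝ, Tendsto (fun n => Z n ω ^ 2) atTop (𝓝 L)) ∧
    Tendsto (fun n => ∫ ω, Z n ω ^ 2 ∂μ) atTop (𝓝 0) ∧
    (∀ᵐ ω ∂μ, Tendsto (fun n => Z n ω) atTop (𝓝 0)) := by
  set f : ℕ → Ω → ℝ := fun n ω => Z n ω ^ 2 + κ / T n with hfdef
  -- adapted
  have hadf : StronglyAdapted 𝓕 f := by
    intro n
    have h1 : StronglyMeasurable[𝓕 n] fun ω => Z n ω * Z n ω := ((hadapted n).mul (hadapted n)).stronglyMeasurable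
    have h2 : StronglyMeasurable[𝓕 n] fun ω => Z n ω ^ 2 := by simpa [pow_two] using h1
    exact h2.add stronglyMeasurable_const
  have hintf : ∀ n, Integrable (f n) μ := fun n => (hint n).add (integrable_const _)
  have hsm : Supermartingale f 𝓕 μ := by
    refine supermartingale_nat hadf hintf fun i => ?_
    simpa using hsuper (i + 1) (by omega)
  -- nonneg
  have hnonneg : ∀ n, 0 ≤ᵐ[μ] f n := fun n =>
    Eventually.of_forall fun ω => by
      have := hT n
      have := sq_nonneg (Z n ω)
      positivity
  -- K nonneg
  have hK : 0 ≤ K := by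
    obtain ⟨ω, hω⟩ := (hbdd 0).exists
    exact le_trans (abs_nonneg _) hω
  -- L1 bound
  set C : ℝ := K ^ 2 + κ / T 0 with hCdef
  have hfC : ∀ n, ∀ᵐ ω ∂μ, ‖(-f) n ω‖ ≤ C := by
    intro n
    filter_upwards [hbdd n] with ω hω
    have h1 : Z n ω ^ 2 ≤ K ^ 2 := by
      rw [← sq_abs]
      exact pow_le_pow_left₀ (abs_nonneg _) hω 2
    have h2 : κ / T n ≤ κ / T 0 := by
      gcongr
      · exact hT 0
      · exact hTmono (Nat.zero_le n)
    have h3 : (0:ℝ) ≤ Z n ω ^ 2 + κ / T n := by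
      have := hT n; have := sq_nonneg (Z n ω); positivity
    simp only [Pi.neg_apply, norm_neg, Real.norm_eq_abs, hfdef]
    rw [abs_of_nonneg h3]
    linarith
  have heLp : ∀ n, eLpNorm ((-f) n) 1 μ ≤ ((C.toNNReal : NNReal) : ENNReal) := by
    intro n
    refine le_trans (eLpNorm_le_of_ae_bound (hfC n)) ?_
    simp [ENNReal.ofReal]
  have hsub : Submartingale (-f) 𝓕 μ := hsm.neg
  have hconv := hsub.ae_tendsto_limitProcess heLp
  set ℓ : Ω → ℝ := 𝓕.limitProcess (-f) μ with hldef
  have hκT : Tendsto (fun n => κ / T n) atTop (𝓝 0) :=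
    Tendsto.div_atTop tendsto_const_nhds hTtop
  have hZ2conv : ∀ᵐ ω ∂μ, Tendsto (fun n => Z n ω ^ 2) atTop (𝓝 (-ℓ ω)) := by
    filter_upwards [hconv] with ω hω
    have h1 : Tendsto (fun n => f n ω) atTop (𝓝 (-ℓ ω)) := by
      have := hω.neg
      simpa using this
    have h2 := h1.sub hκT
    simpa [hfdef] using h2
  -- integral recursion
  have hint_rhs : ∀ n, Integrable (fun ω => c n * Z (n - 1) ω ^ 2 + d n) μ := fun n =>
    ((hint (n - 1)).const_mul _).add (integrable_const _)
  have haineq : ∀ n, 1 ≤ n →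
      (∫ ω, Z n ω ^ 2 ∂μ) ≤ c n * (∫ ω, Z (n - 1) ω ^ 2 ∂μ) + d n := by
    intro n hn
    have h := integral_mono_ae integrable_condExp (hint_rhs n) (hrec n hn)
    rw [integral_condExp (𝓕.le (n - 1))] at h
    rwa [integral_add ((hint (n - 1)).const_mul _) (integrable_const _),
      integral_const_mul, integral_const, probReal_univ, smul_eq_mul,
      one_mul] at h
  have hE0 : Tendsto (fun n => ∫ ω, Z n ω ^ 2 ∂μ) atTop (𝓝 0) :=
    aux_tendsto (fun n => ∫ ω, Z n ω ^ 2 ∂μ) c d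
      (fun n => integral_nonneg fun ω => sq_nonneg _) haineq hc hd hsum hprod
  -- DCT to identify the limit
  have hDCT : Tendsto (fun n => ∫ ω, Z n ω ^ 2 ∂μ) atTop (𝓝 (∫ ω, -ℓ ω ∂μ)) := by
    refine tendsto_integral_of_dominated_convergence (fun _ => K ^ 2)
      (fun n => (hint n).aestronglyMeasurable) (integrable_const _) (fun n => ?_) hZ2conv
    filter_upwards [hbdd n] with ω hω
    rw [Real.norm_eq_abs, abs_of_nonneg (sq_nonneg _), ← sq_abs]
    exact pow_le_pow_left₀ (abs_nonneg _) hω 2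
  have hint_l : Integrable (fun ω => -ℓ ω) μ := by
    have hmem : MemLp ℓ 1 μ :=
      Filtration.memLp_limitProcess_of_eLpNorm_bdd (fun n => ((hintf n).neg).aestronglyMeasurable) heLp
    exact (hmem.integrable le_rfl).neg
  have hl_nonneg : 0 ≤ᵐ[μ] fun ω => -ℓ ω := by
    filter_upwards [hZ2conv] with ω hω
    exact ge_of_tendsto' hω fun n => sq_nonneg _
  have hint0 : (∫ ω, -ℓ ω ∂μ) = 0 := tendsto_nhds_unique hDCT hE0
  have hl0 : (fun ω => -ℓ ω) =ᵐ[μ] 0 :=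
    (integral_eq_zero_iff_of_nonneg_ae hl_nonneg hint_l).mp hint0
  have hZ20 : ∀ᵐ ω ∂μ, Tendsto (fun n => Z n ω ^ 2) atTop (𝓝 0) := by
    filter_upwards [hZ2conv, hl0] with ω h1 h2
    simp only [Pi.zero_apply] at h2
    rwa [h2] at h1
  refine ⟨hsm, hnonneg, ?_, hE0, ?_⟩
  · filter_upwards [hZ2conv] with ω hω
    exact ⟨_, hω⟩
  · filter_upwards [hZ20] with ω hω
    have habs : Tendsto (fun n => |Z n ω|) atTop (𝓝 0) := by
      have h := (Real.continuous_sqrt.tendsto 0).comp hω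
      simpa [Function.comp_def, Real.sqrt_sq_eq_abs] using h
    exact tendsto_of_tendsto_of_tendsto_of_le_of_le (by simpa using habs.neg) habs
      (fun n => neg_abs_le _) (fun n => le_abs_self _)
end
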